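/- arXiv:2505.04820 — 2 statements merged into one kernel-verified Lean document; each statement's English description precedes it below -/
import Mathlib

section
/- Let h : ℂ^N → ℝ be convex, let C ⊆ ℂ^N be a nonempty closed convex set, let x ∈ C, g ∈ ℂ^N, and α > 0. Let B ∈ ℂ^{N×N} be Hermitian positive definite with B ⪯ η̄·I_N for some η̄ > 0. Then D_h^C(x, g, B, α) ≥ (1/η̄)·D_h^C(x, g, I_N, α/η̄). -/
open scoped ComplexOrder

noncomputable section

/-- `ℂ^N` with the standard complex inner product (conjugate-linear in the
first argument) and the induced norm. -/
abbrev EC (N : ℕ) := EuclideanSpace ℂ (Fin N)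

/-- Weighted squared norm `‖z‖_W² = zᴴ W z` (its real part, which is the full
value when `W` is Hermitian). -/
def wnorm2 {N : ℕ} (W : Matrix (Fin N) (Fin N) ℂ) (z : EC N) : ℝ :=
  (dotProduct (fun i => starRingEnd ℂ (z i)) (W.mulVec (fun i => z i))).re

/-- Surrogate `S_h(x̄, x, g, W, α) = Re⟨g, x̄ − x⟩ + (1/(2α))‖x̄ − x‖_W² + h(x̄) − h(x)`. -/
def Sh {N : ℕ} (h : EC N → ℝ) (W : Matrix (Fin N) (Fin N) ℂ) (α : ℝ)
    (g x xb : EC N) : ℝ :=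
  (inner ℂ g (xb - x) : ℂ).re + (1 / (2 * α)) * wnorm2 W (xb - x) + h xb - h x

/-- `D_h^C(x, g, W, α) = −(2/α)·inf_{x̄ ∈ C} S_h(x̄, x, g, W, α)`. -/
def Dh {N : ℕ} (h : EC N → ℝ) (C : Set (EC N)) (W : Matrix (Fin N) (Fin N) ℂ)
    (α : ℝ) (g x : EC N) : ℝ :=
  -(2 / α) * sInf ((fun xb => Sh h W α g x xb) '' C)

/-- The real-linear continuous functional `d ↦ Re⟨g, d⟩`, used to say that a
real-differentiable `f : ℂ^N → ℝ` has gradient `g` at a point. -/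
def gradDual {N : ℕ} (g : EC N) : EC N →L[ℝ] ℝ :=
  Complex.reCLM.comp ((innerSL ℂ g).restrictScalars ℝ)

/-- The rank-one matrix `u·uᴴ` with entries `uᵢ · conj(uⱼ)`. -/
def rankOne {N : ℕ} (u : EC N) : Matrix (Fin N) (Fin N) ℂ :=
  Matrix.vecMulVec (fun i => u i) (fun i => starRingEnd ℂ (u i))

end

section Aux

noncomputable section

lemma wnorm2_one' {N : ℕ} (z : EC N) : wnorm2 1 z = ‖z‖^2 := by
  have h1 : (dotProduct (fun i => starRingEnd ℂ (z i)) (fun i => z i)) = (inner ℂ z z : ℂ) := by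
    simp only [dotProduct, PiLp.inner_apply, RCLike.inner_apply, mul_comm]
  simp only [wnorm2, Matrix.one_mulVec]
  rw [h1]; exact inner_self_eq_norm_sq (𝕜 := ℂ) z

lemma wnorm2_le' {N : ℕ} {B : Matrix (Fin N) (Fin N) ℂ} {ηb : ℝ}
    (hBub : (ηb • (1 : Matrix (Fin N) (Fin N) ℂ) - B).PosSemidef) (z : EC N) :
    wnorm2 B z ≤ ηb * ‖z‖^2 := by
  have h0 := hBub.re_dotProduct_nonneg (fun i => z i)
  have hexp : dotProduct (star (fun i => z i))
      ((ηb • (1 : Matrix (Fin N) (Fin N) ℂ) - B).mulVec (fun i => z i))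
      = ηb • (dotProduct (fun i => starRingEnd ℂ (z i)) (fun i => z i))
        - dotProduct (fun i => starRingEnd ℂ (z i)) (B.mulVec (fun i => z i)) := by
    rw [Matrix.sub_mulVec, dotProduct_sub, Matrix.smul_mulVec,
      Matrix.one_mulVec, dotProduct_smul]
    rfl
  rw [hexp] at h0
  have h1 : (dotProduct (fun i => starRingEnd ℂ (z i)) (fun i => z i)) = (inner ℂ z z : ℂ) := by
    simp only [dotProduct, PiLp.inner_apply, RCLike.inner_apply, mul_comm]
  rw [h1] at h0
  have h2 : ((inner ℂ z z : ℂ)).re = ‖z‖^2 := inner_self_eq_norm_sq (𝕜 := ℂ) z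
  have h3 : RCLike.re (ηb • (inner ℂ z z : ℂ) - dotProduct (fun i => starRingEnd ℂ (z i)) (B.mulVec (fun i => z i)))
      = ηb * ‖z‖^2 - wnorm2 B z := by
    show (ηb • (inner ℂ z z : ℂ) - dotProduct (fun i => starRingEnd ℂ (z i)) (B.mulVec (fun i => z i))).re = _
    rw [Complex.sub_re, Complex.smul_re, h2]; rfl
  rw [h3] at h0
  linarith

lemma wnorm2_cont' {N : ℕ} (W : Matrix (Fin N) (Fin N) ℂ) : Continuous (wnorm2 W) := by
  show Continuous fun z : EC N =>
    (dotProduct (fun i => star (z i)) (W.mulVec (fun i => z i))).re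
  simp only [dotProduct, Matrix.mulVec]
  fun_prop

lemma wnorm2_smul' {N : ℕ} (W : Matrix (Fin N) (Fin N) ℂ) (r : ℝ) (z : EC N) :
    wnorm2 W (r • z) = r^2 * wnorm2 W z := by
  have hz : (fun i => ((r • z : EC N) i)) = (r : ℂ) • (fun i => z i) := by
    funext i; simp [Complex.real_smul]
  have hc : (fun i => starRingEnd ℂ ((r • z : EC N) i)) = (r : ℂ) • (fun i => starRingEnd ℂ (z i)) := by
    funext i; simp [Complex.real_smul]
  unfold wnorm2
  rw [hz, hc, Matrix.mulVec_smul, smul_dotProduct, dotProduct_smul]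
  simp [Complex.ext_iff]
  ring

lemma wnorm2_zero' {N : ℕ} (W : Matrix (Fin N) (Fin N) ℂ) : wnorm2 W (0 : EC N) = 0 := by
  simp [wnorm2]

lemma wnorm2_coercive' {N : ℕ} {B : Matrix (Fin N) (Fin N) ℂ} (hB : B.PosDef) :
    ∃ ε : ℝ, 0 < ε ∧ ∀ z : EC N, ε * ‖z‖^2 ≤ wnorm2 B z := by
  by_cases hS : (Metric.sphere (0 : EC N) 1).Nonempty
  · obtain ⟨u₀, hu₀, hmin⟩ := (isCompact_sphere (0 : EC N) 1).exists_isMinOn hS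
      (wnorm2_cont' B).continuousOn
    have hu₀n : ‖u₀‖ = 1 := by simpa using hu₀
    have hu₀ne : (fun i => u₀ i) ≠ 0 := by
      intro hzero
      have : u₀ = 0 := by ext i; exact congrFun hzero i
      rw [this] at hu₀n; simp at hu₀n
    have hε : 0 < wnorm2 B u₀ := hB.re_dotProduct_pos hu₀ne
    refine ⟨wnorm2 B u₀, hε, fun z => ?_⟩
    rcases eq_or_ne z 0 with rfl | hz
    · simp [wnorm2_zero']
    · have hnz : 0 < ‖z‖ := norm_pos_iff.mpr hz
      set u : EC N := ‖z‖⁻¹ • z with hu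
      have hun : u ∈ Metric.sphere (0 : EC N) 1 := by
        simp [hu, norm_smul, abs_of_pos (inv_pos.mpr hnz), inv_mul_cancel₀ hnz.ne']
      have h1 := hmin hun
      have h2 : wnorm2 B u = ‖z‖⁻¹^2 * wnorm2 B z := wnorm2_smul' B _ z
      have h3 : wnorm2 B u₀ ≤ ‖z‖⁻¹^2 * wnorm2 B z := by rw [← h2]; exact h1
      have h4 : wnorm2 B u₀ * ‖z‖^2 ≤ wnorm2 B z := by
        have := mul_le_mul_of_nonneg_right h3 (sq_nonneg ‖z‖)
        calc wnorm2 B u₀ * ‖z‖^2 ≤ ‖z‖⁻¹^2 * wnorm2 B z * ‖z‖^2 := this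
          _ = wnorm2 B z := by field_simp
      linarith
  · refine ⟨1, one_pos, fun z => ?_⟩
    rcases eq_or_ne z 0 with rfl | hz
    · simp [wnorm2_zero']
    · exfalso
      have hnz : 0 < ‖z‖ := norm_pos_iff.mpr hz
      exact hS ⟨‖z‖⁻¹ • z, by
        simp [norm_smul, abs_of_pos (inv_pos.mpr hnz), inv_mul_cancel₀ hnz.ne']⟩

lemma affine_minorant' {N : ℕ} {h : EC N → ℝ} (hconv : ConvexOn ℝ Set.univ h) :
    ∃ K c : ℝ, 0 ≤ K ∧ ∀ y : EC N, -(K * ‖y‖) + c ≤ h y := by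
  have hcont : Continuous h := by
    rw [← continuousOn_univ]
    exact hconv.continuousOn isOpen_univ
  set epi : Set (EC N × ℝ) := {p | h p.1 ≤ p.2} with hepi
  have hepiconv : Convex ℝ epi := by
    have := hconv.convex_epigraph
    simpa [hepi, Set.mem_univ] using this
  have hepicl : IsClosed epi := isClosed_le (hcont.comp continuous_fst) continuous_snd
  have hpt : ((0 : EC N), h 0 - 1) ∉ epi := by
    simp [hepi]
  obtain ⟨f, u, hfu, hball⟩ := geometric_hahn_banach_point_closed hepiconv hepicl hpt
  have hlin : ∀ (y : EC N) (t : ℝ), f (y, t) = f (y, 0) + t * f (0, 1) := by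
    intro y t
    have hyt : (y, t) = (y, (0:ℝ)) + t • ((0 : EC N), (1:ℝ)) := by
      simp [Prod.ext_iff]
    rw [hyt, map_add, map_smul, smul_eq_mul]
  set m : ℝ := f (0, 1) with hm
  have hmpos : 0 < m := by
    have h1 : f (0, h 0 - 1) < u := hfu
    have h2 : u < f (0, h 0) := hball (0, h 0) (by simp [hepi])
    rw [hlin 0 (h 0 - 1)] at h1
    rw [hlin 0 (h 0)] at h2
    nlinarith
  set φ : EC N →L[ℝ] ℝ := f.comp (ContinuousLinearMap.inl ℝ (EC N) ℝ) with hφ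
  have hφval : ∀ y : EC N, φ y = f (y, 0) := fun y => rfl
  refine ⟨‖φ‖ / m, u / m, div_nonneg (norm_nonneg _) hmpos.le, fun y => ?_⟩
  have hy : u < f (y, 0) + h y * m := by
    have := hball (y, h y) (by simp [hepi])
    rwa [hlin y (h y)] at this
  have hφb : f (y, 0) ≤ ‖φ‖ * ‖y‖ := by
    rw [← hφval]
    calc φ y ≤ |φ y| := le_abs_self _
      _ = ‖φ y‖ := (Real.norm_eq_abs _).symm
      _ ≤ ‖φ‖ * ‖y‖ := φ.le_opNorm y
  have : u - ‖φ‖ * ‖y‖ ≤ h y * m := by nlinarith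
  have hgoal : (u - ‖φ‖ * ‖y‖) / m ≤ h y := by
    rw [div_le_iff₀ hmpos]; linarith
  calc -(‖φ‖ / m * ‖y‖) + u / m = (u - ‖φ‖ * ‖y‖) / m := by field_simp; ring
    _ ≤ h y := hgoal

lemma Sh_self' {N : ℕ} (h : EC N → ℝ) (W : Matrix (Fin N) (Fin N) ℂ) (α : ℝ)
    (g x : EC N) : Sh h W α g x x = 0 := by
  simp [Sh, wnorm2_zero']

lemma Sh_bddBelow' {N : ℕ} {h : EC N → ℝ} (hconv : ConvexOn ℝ Set.univ h)
    {B : Matrix (Fin N) (Fin N) ℂ} (hB : B.PosDef) (C : Set (EC N))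
    (g x : EC N) {α : ℝ} (hα : 0 < α) :
    BddBelow ((fun xb => Sh h B α g x xb) '' C) := by
  obtain ⟨ε, hε, hco⟩ := wnorm2_coercive' hB
  obtain ⟨K, c, hK, hmin⟩ := affine_minorant' hconv
  set a : ℝ := ε / (2 * α) with ha
  have hapos : 0 < a := by positivity
  set b : ℝ := ‖g‖ + K with hb
  have hbnn : 0 ≤ b := add_nonneg (norm_nonneg _) hK
  set M : ℝ := -(b^2 / (4 * a)) + (c - K * ‖x‖ - h x) with hM
  refine ⟨M, fun s hs => ?_⟩
  obtain ⟨xb, _, rfl⟩ := hs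
  set d : EC N := xb - x with hd
  set t : ℝ := ‖d‖ with ht
  have htnn : 0 ≤ t := norm_nonneg _
  -- inner term
  have hinner : -(‖g‖ * t) ≤ (inner ℂ g d : ℂ).re := by
    have h1 : |(inner ℂ g d : ℂ).re| ≤ ‖(inner ℂ g d : ℂ)‖ := Complex.abs_re_le_norm _
    have h2 : ‖(inner ℂ g d : ℂ)‖ ≤ ‖g‖ * ‖d‖ := norm_inner_le_norm g d
    have := neg_abs_le ((inner ℂ g d : ℂ)).re
    linarith
  -- quadratic term
  have hquad : a * t^2 ≤ (1 / (2 * α)) * wnorm2 B d := by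
    have h1 : ε * t^2 ≤ wnorm2 B d := hco d
    have h2 : (1 / (2 * α)) * (ε * t^2) ≤ (1 / (2 * α)) * wnorm2 B d :=
      mul_le_mul_of_nonneg_left h1 (by positivity)
    calc a * t^2 = (1 / (2 * α)) * (ε * t^2) := by rw [ha]; ring
      _ ≤ _ := h2
  -- affine term
  have hxbnorm : ‖xb‖ ≤ ‖x‖ + t := by
    have : xb = x + d := by rw [hd]; abel
    rw [this]; exact norm_add_le _ _
  have haff : -(K * (‖x‖ + t)) + c ≤ h xb := by
    have := hmin xb
    have h2 : K * ‖xb‖ ≤ K * (‖x‖ + t) := mul_le_mul_of_nonneg_left hxbnorm hK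
    linarith
  -- quadratic lower bound
  have hq : -(b^2 / (4 * a)) ≤ a * t^2 - b * t := by
    have h4a : 0 < 4 * a := by linarith
    have hstep : b * t - a * t^2 ≤ b^2 / (4 * a) := by
      rw [le_div_iff₀ h4a]; nlinarith [sq_nonneg (2 * a * t - b)]
    linarith
  have : M ≤ (inner ℂ g d : ℂ).re + (1 / (2 * α)) * wnorm2 B d + h xb - h x := by
    rw [hM, hb] at *
    nlinarith
  simpa [Sh, hd, inner_sub_right] using this

end

end Aux

/-- Comparison of `D_h^C` with the identity weighting.
For `h` convex, `C` nonempty closed convex, `x ∈ C`, `g ∈ ℂ^N`, `α > 0`, and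
`B` Hermitian positive definite with `B ⪯ η̄·I` for some `η̄ > 0`, one has
`D_h^C(x, g, B, α) ≥ (1/η̄)·D_h^C(x, g, I, α/η̄)`. -/
theorem stmt13 {N : ℕ} (h : EC N → ℝ) (hconv : ConvexOn ℝ Set.univ h)
    (C : Set (EC N)) (hCne : C.Nonempty) (hCcl : IsClosed C) (hCcv : Convex ℝ C)
    (x : EC N) (hx : x ∈ C) (g : EC N) (α : ℝ) (hα : 0 < α)
    (B : Matrix (Fin N) (Fin N) ℂ) (hB : B.PosDef)
    (ηb : ℝ) (hηb : 0 < ηb)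
    (hBub : (ηb • (1 : Matrix (Fin N) (Fin N) ℂ) - B).PosSemidef) :
    Dh h C B α g x ≥ (1 / ηb) * Dh h C 1 (α / ηb) g x := by
  set A : Set ℝ := (fun xb => Sh h B α g x xb) '' C with hA
  set A1 : Set ℝ := (fun xb => Sh h 1 (α / ηb) g x xb) '' C with hA1
  have hAbdd : BddBelow A := Sh_bddBelow' hconv hB C g x hα
  have hA1ne : A1.Nonempty := ⟨_, Set.mem_image_of_mem _ hx⟩
  -- pointwise comparison
  have hpt : ∀ xb, Sh h B α g x xb ≤ Sh h 1 (α / ηb) g x xb := by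
    intro xb
    unfold Sh
    rw [wnorm2_one']
    have h1 : wnorm2 B (xb - x) ≤ ηb * ‖xb - x‖^2 := wnorm2_le' hBub _
    have h2 : (1 / (2 * α)) * wnorm2 B (xb - x) ≤ (1 / (2 * α)) * (ηb * ‖xb - x‖^2) :=
      mul_le_mul_of_nonneg_left h1 (by positivity)
    have h3 : (1 / (2 * α)) * (ηb * ‖xb - x‖^2) = (1 / (2 * (α / ηb))) * ‖xb - x‖^2 := by
      field_simp
    linarith
  have hInf : sInf A ≤ sInf A1 := by
    apply le_csInf hA1ne
    rintro b ⟨xb, hxb, rfl⟩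
    calc sInf A ≤ Sh h B α g x xb := csInf_le hAbdd ⟨xb, hxb, rfl⟩
      _ ≤ _ := hpt xb
  have hcoef : (1 / ηb) * -(2 / (α / ηb)) = -(2 / α) := by
    field_simp
  have hneg : -(2 / α) ≤ 0 := by
    have : 0 < 2 / α := by positivity
    linarith
  unfold Dh
  rw [← hA, ← hA1, ge_iff_le, ← mul_assoc, hcoef]
  exact mul_le_mul_of_nonpos_left hInf hneg
end

section
/- Let f : ℂ^N → ℝ be differentiable (over ℝ) with L-Lipschitz gradient ∇f for some L > 0, let h : ℂ^N → ℝ be convex and differentiable, and set F = h + f. Let C ⊆ ℂ^N be a nonempty closed convex set with F* := inf_{x ∈ C} F(x) finite. Let 0 < η < η̄ and ν > 0. Suppose a sequence x₁, x₂, … in C is generated as follows: for each k, B_k ∈ ℂ^{N×N} is Hermitian with η·I_N ⪯ B_k ⪯ η̄·I_N, the stepsize satisfies 0 < α_min ≤ α_k ≤ min{η̄/ν, η/L} where α_min := inf_k α_k > 0, and x_{k+1} is a minimizer over C of x̄ ↦ S_h(x̄, x_k, ∇f(x_k), B_k, α_k). Moreover suppose the proximal Polyak–Łojasiewicz inequality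 D_h^C(z, ∇f(z), I_N, α/η̄) ≥ 2ν·(F(z) − F*) holds for all z ∈ C and all α ∈ (0, η/L]. Then for every k ≥ 1, F(x_{k+1}) − F* ≤ (1 − ν·α_min/η̄)^k · (F(x₁) − F*). -/
open scoped ComplexOrder

lemma gradDual_apply' {N : ℕ} (g d : EC N) : gradDual g d = (inner ℂ g d : ℂ).re := rfl

lemma wnorm2_nonneg' {N : ℕ} {M : Matrix (Fin N) (Fin N) ℂ} (hM : M.PosSemidef) (z : EC N) :
    0 ≤ wnorm2 M z := by
  have := hM.dotProduct_mulVec_nonneg (fun i => z i)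
  exact (Complex.le_def.mp this).1

lemma wnorm2_sub' {N : ℕ} (A B : Matrix (Fin N) (Fin N) ℂ) (z : EC N) :
    wnorm2 (A - B) z = wnorm2 A z - wnorm2 B z := by
  simp [wnorm2, Matrix.sub_mulVec, dotProduct_sub]

lemma wnorm2_smul_one' {N : ℕ} (c : ℝ) (z : EC N) :
    wnorm2 (c • (1 : Matrix (Fin N) (Fin N) ℂ)) z = c * ‖z‖ ^ 2 := by
  have h1 : ‖z‖ ^ 2 = (inner ℂ z z : ℂ).re := norm_sq_eq_re_inner (𝕜 := ℂ) z
  rw [h1, PiLp.inner_apply]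
  simp [wnorm2, Matrix.smul_mulVec, Matrix.one_mulVec, dotProduct_smul,
    dotProduct, Finset.mul_sum]
  exact Finset.sum_congr rfl fun i _ => by
    rw [← Complex.ofReal_pow, Complex.ofReal_re, ← Complex.normSq_eq_norm_sq, Complex.normSq_apply]; ring

lemma descent' {N : ℕ} (f : EC N → ℝ) (gradf : EC N → EC N) (L : ℝ)
    (hfdiff : ∀ z : EC N, HasFDerivAt f (gradDual (gradf z)) z)
    (hlip : ∀ z₁ z₂ : EC N, ‖gradf z₁ - gradf z₂‖ ≤ L * ‖z₁ - z₂‖)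
    (x y : EC N) :
    f y ≤ f x + (inner ℂ (gradf x) (y - x) : ℂ).re + L / 2 * ‖y - x‖ ^ 2 := by
  set d := y - x with hd
  have hline : ∀ t : ℝ, HasDerivAt (fun t : ℝ => f (x + t • d))
      ((inner ℂ (gradf (x + t • d)) d : ℂ).re) t := by
    intro t
    have h1 : HasDerivAt (fun t : ℝ => x + t • d) d t := by
      simpa using ((hasDerivAt_id t).smul_const d).const_add x
    have := (hfdiff (x + t • d)).comp_hasDerivAt t h1
    exact this
  set χ : ℝ → ℝ := fun t => L * ‖d‖ ^ 2 * t ^ 2 / 2 + t * (inner ℂ (gradf x) d : ℂ).re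
      + f x - f (x + t • d) with hχ
  have hχd : ∀ t : ℝ, HasDerivAt χ
      (L * ‖d‖ ^ 2 * t + (inner ℂ (gradf x) d : ℂ).re - (inner ℂ (gradf (x + t • d)) d : ℂ).re) t := by
    intro t
    have h1 : HasDerivAt (fun t : ℝ => L * ‖d‖ ^ 2 * t ^ 2 / 2 + t * (inner ℂ (gradf x) d : ℂ).re + f x)
        (L * ‖d‖ ^ 2 * t + (inner ℂ (gradf x) d : ℂ).re) t := by
      have : HasDerivAt (fun t : ℝ => t ^ 2) (2 * t) t := by
        simpa using hasDerivAt_pow 2 t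
      have h2 := ((this.const_mul (L * ‖d‖ ^ 2)).div_const 2).add
        ((hasDerivAt_id t).mul_const ((inner ℂ (gradf x) d : ℂ).re))
      have h3 := h2.add_const (f x)
      exact h3.congr_deriv (by ring)
    exact h1.sub (hline t)
  have hmono : MonotoneOn χ (Set.Icc 0 1) := by
    apply monotoneOn_of_deriv_nonneg (convex_Icc 0 1)
    · exact fun t _ => ((hχd t).continuousAt).continuousWithinAt
    · intro t ht
      exact ((hχd t).differentiableAt).differentiableWithinAt
    · intro t ht
      rw [interior_Icc] at ht
      rw [(hχd t).deriv]
      have key : (inner ℂ (gradf (x + t • d)) d : ℂ).re - (inner ℂ (gradf x) d : ℂ).re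
          ≤ L * ‖d‖ ^ 2 * t := by
        have h1 : (inner ℂ (gradf (x + t • d)) d : ℂ).re - (inner ℂ (gradf x) d : ℂ).re
            = (inner ℂ (gradf (x + t • d) - gradf x) d : ℂ).re := by
          rw [inner_sub_left]; simp
        rw [h1]
        calc (inner ℂ (gradf (x + t • d) - gradf x) d : ℂ).re
            ≤ ‖(inner ℂ (gradf (x + t • d) - gradf x) d : ℂ)‖ := Complex.re_le_norm _
          _ ≤ ‖gradf (x + t • d) - gradf x‖ * ‖d‖ := norm_inner_le_norm _ _
          _ ≤ (L * ‖x + t • d - x‖) * ‖d‖ := by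
              apply mul_le_mul_of_nonneg_right (hlip _ _) (norm_nonneg _)
          _ = L * ‖d‖ ^ 2 * t := by
              simp [norm_smul, abs_of_pos ht.1]; ring
      linarith
  have h01 := hmono (Set.mem_Icc.mpr ⟨le_refl 0, zero_le_one⟩)
    (Set.mem_Icc.mpr ⟨zero_le_one, le_refl 1⟩) zero_le_one
  have hχ0 : χ 0 = 0 := by simp [hχ]
  have hxy : x + d = y := by rw [hd]; abel
  have hχ1 : χ 1 = L * ‖d‖ ^ 2 / 2 + (inner ℂ (gradf x) d : ℂ).re + f x - f y := by
    simp [hχ, hxy]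
  rw [hχ0, hχ1] at h01
  linarith

set_option maxHeartbeats 1600000 in
/-- Linear convergence of the cost values under the PL
inequality. Let `f` be real-differentiable with `L`-Lipschitz gradient,
`h` convex differentiable, `F = h + f`, `C` nonempty closed convex with finite
infimum `F*`. Let `0 < η < η̄`, `ν > 0`, and suppose the sequence
`x₁, x₂, …` in `C` is generated with Hermitian `η·I ⪯ B_k ⪯ η̄·I`, stepsizes
`0 < α_min ≤ α_k ≤ min{η̄/ν, η/L}`, and `x_{k+1}` a minimizer over `C` of
`x̄ ↦ S_h(x̄, x_k, ∇f(x_k), B_k, α_k)`. If the proximal PL inequality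
`D_h^C(z, ∇f(z), I, α/η̄) ≥ 2ν(F(z) − F*)` holds for all `z ∈ C` and all
`α ∈ (0, η/L]`, then for every `k ≥ 1`,
`F(x_{k+1}) − F* ≤ (1 − να_min/η̄)^k (F(x₁) − F*)`. -/
theorem stmt16 {N : ℕ} (f : EC N → ℝ) (gradf : EC N → EC N) (L : ℝ) (hL : 0 < L)
    (hfdiff : ∀ z : EC N, HasFDerivAt f (gradDual (gradf z)) z)
    (hlip : ∀ z₁ z₂ : EC N, ‖gradf z₁ - gradf z₂‖ ≤ L * ‖z₁ - z₂‖)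
    (h : EC N → ℝ) (hconv : ConvexOn ℝ Set.univ h) (hdiff : Differentiable ℝ h)
    (F : EC N → ℝ) (hF : F = fun z => h z + f z)
    (C : Set (EC N)) (hCne : C.Nonempty) (hCcl : IsClosed C) (hCcv : Convex ℝ C)
    (Fstar : ℝ) (hFstar : IsGLB (F '' C) Fstar)
    (η ηb : ℝ) (hη : 0 < η) (hηηb : η < ηb) (ν : ℝ) (hν : 0 < ν)
    (x : ℕ → EC N) (B : ℕ → Matrix (Fin N) (Fin N) ℂ) (α : ℕ → ℝ)
    (hxC : ∀ k, 1 ≤ k → x k ∈ C)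
    (hBH : ∀ k, 1 ≤ k → (B k).IsHermitian)
    (hBlb : ∀ k, 1 ≤ k → (B k - η • (1 : Matrix (Fin N) (Fin N) ℂ)).PosSemidef)
    (hBub : ∀ k, 1 ≤ k → (ηb • (1 : Matrix (Fin N) (Fin N) ℂ) - B k).PosSemidef)
    (αmin : ℝ) (hαmin : 0 < αmin)
    (hαlb : ∀ k, 1 ≤ k → αmin ≤ α k)
    (hαub : ∀ k, 1 ≤ k → α k ≤ min (ηb / ν) (η / L))
    (hupd : ∀ k, 1 ≤ k →
      IsMinOn (fun xb => Sh h (B k) (α k) (gradf (x k)) (x k) xb) C (x (k + 1)))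
    (hPL : ∀ z ∈ C, ∀ α' : ℝ, 0 < α' → α' ≤ η / L →
      Dh h C 1 (α' / ηb) (gradf z) z ≥ 2 * ν * (F z - Fstar)) :
    ∀ k, 1 ≤ k →
      F (x (k + 1)) - Fstar ≤ (1 - ν * αmin / ηb) ^ k * (F (x 1) - Fstar) := by
  have hηb : 0 < ηb := lt_trans hη hηηb
  have hFk : ∀ k, 1 ≤ k → 0 ≤ F (x k) - Fstar := fun k hk =>
    sub_nonneg.mpr (hFstar.1 ⟨x k, hxC k hk, rfl⟩)
  -- per-step inequality
  have key : ∀ k, 1 ≤ k →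
      F (x (k + 1)) - Fstar ≤ (1 - ν * α k / ηb) * (F (x k) - Fstar) := by
    intro k hk
    have hαk : 0 < α k := lt_of_lt_of_le hαmin (hαlb k hk)
    have hαL : α k ≤ η / L := le_trans (hαub k hk) (min_le_right _ _)
    have hαν : α k ≤ ηb / ν := le_trans (hαub k hk) (min_le_left _ _)
    set g := gradf (x k) with hg
    set xk := x k with hxk
    set xk1 := x (k + 1) with hxk1
    have hxk1C : xk1 ∈ C := hxC (k + 1) (by omega)
    -- lower bound on wnorm2 (B k)
    have hwlb : ∀ z : EC N, η * ‖z‖ ^ 2 ≤ wnorm2 (B k) z := by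
      intro z
      have h0 := wnorm2_nonneg' (hBlb k hk) z
      rw [wnorm2_sub', wnorm2_smul_one'] at h0
      linarith
    have hwub : ∀ z : EC N, wnorm2 (B k) z ≤ ηb * ‖z‖ ^ 2 := by
      intro z
      have h0 := wnorm2_nonneg' (hBub k hk) z
      rw [wnorm2_sub', wnorm2_smul_one'] at h0
      linarith
    -- descent: F xk1 - F xk ≤ Sh h (B k) (α k) g xk xk1
    have hdesc := descent' f gradf L hfdiff hlip xk xk1
    have hLα : L / 2 * ‖xk1 - xk‖ ^ 2 ≤ 1 / (2 * α k) * wnorm2 (B k) (xk1 - xk) := by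
      have h1 : L * α k ≤ η := by
        rw [le_div_iff₀ hL] at hαL; linarith
      have h2 := hwlb (xk1 - xk)
      have h3 : L / 2 * ‖xk1 - xk‖ ^ 2 ≤ 1 / (2 * α k) * (η * ‖xk1 - xk‖ ^ 2) := by
        rw [div_mul_eq_mul_div, one_div, inv_mul_eq_div, div_le_div_iff₀ two_pos (by positivity)]
        have hnn : (0:ℝ) ≤ ‖xk1 - xk‖ ^ 2 := by positivity
        nlinarith
      calc L / 2 * ‖xk1 - xk‖ ^ 2 ≤ 1 / (2 * α k) * (η * ‖xk1 - xk‖ ^ 2) := h3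
        _ ≤ 1 / (2 * α k) * wnorm2 (B k) (xk1 - xk) := by
            apply mul_le_mul_of_nonneg_left h2 (by positivity)
    have hFD : F xk1 - F xk ≤ Sh h (B k) (α k) g xk xk1 := by
      rw [hF]; unfold Sh; simp only
      linarith
    -- comparison with the reference surrogate
    have hmin := hupd k hk
    have hcmp : ∀ xb ∈ C, Sh h (B k) (α k) g xk xk1 ≤ Sh h 1 (α k / ηb) g xk xb := by
      intro xb hxb
      have h1 : Sh h (B k) (α k) g xk xk1 ≤ Sh h (B k) (α k) g xk xb :=
        isMinOn_iff.mp hmin xb hxb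
      have h2 : Sh h (B k) (α k) g xk xb ≤ Sh h 1 (α k / ηb) g xk xb := by
        unfold Sh
        have h3 : 1 / (2 * α k) * wnorm2 (B k) (xb - xk)
            ≤ 1 / (2 * (α k / ηb)) * wnorm2 1 (xb - xk) := by
          have h4 := hwub (xb - xk)
          have h5 : wnorm2 (1 : Matrix (Fin N) (Fin N) ℂ) (xb - xk) = ‖xb - xk‖ ^ 2 := by
            have := wnorm2_smul_one' (N := N) 1 (xb - xk)
            simpa using this
          rw [h5]
          have h6 : 1 / (2 * (α k / ηb)) = ηb / (2 * α k) := by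
            field_simp
          rw [h6]
          calc 1 / (2 * α k) * wnorm2 (B k) (xb - xk)
              ≤ 1 / (2 * α k) * (ηb * ‖xb - xk‖ ^ 2) := by
                apply mul_le_mul_of_nonneg_left h4 (by positivity)
            _ = ηb / (2 * α k) * ‖xb - xk‖ ^ 2 := by ring
        linarith
      linarith
    -- the infimum bound via PL
    set S := sInf ((fun xb => Sh h 1 (α k / ηb) g xk xb) '' C) with hS
    have hSlb : Sh h (B k) (α k) g xk xk1 ≤ S := by
      apply le_csInf (hCne.image _)
      rintro _ ⟨xb, hxb, rfl⟩
      exact hcmp xb hxb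
    have hβ : 0 < α k / ηb := by positivity
    have hPLk := hPL xk (hxC k hk) (α k) hαk hαL
    have hSub : S ≤ -(α k / ηb) * (ν * (F xk - Fstar)) := by
      unfold Dh at hPLk
      rw [← hS] at hPLk
      have h1 : 2 * ν * (F xk - Fstar) ≤ -(2 / (α k / ηb)) * S := hPLk
      have h2 := mul_le_mul_of_nonneg_left h1 (le_of_lt (half_pos hβ))
      have h3 : α k / ηb / 2 * (-(2 / (α k / ηb)) * S) = -S := by
        field_simp
      rw [h3] at h2
      nlinarith
    -- combine
    have hchain : F xk1 - F xk ≤ -(α k / ηb) * (ν * (F xk - Fstar)) :=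
      le_trans hFD (le_trans hSlb hSub)
    have : -(α k / ηb) * (ν * (F xk - Fstar)) = -(ν * α k / ηb) * (F xk - Fstar) := by
      ring
    rw [this] at hchain
    nlinarith [hchain]
  -- uniform contraction factor
  have hα1 : αmin ≤ ηb / ν := le_trans (hαlb 1 le_rfl) (le_trans (hαub 1 le_rfl) (min_le_left _ _))
  have hc0 : 0 ≤ 1 - ν * αmin / ηb := by
    rw [le_div_iff₀ hν] at hα1
    rw [sub_nonneg, div_le_one hηb]
    nlinarith
  have step : ∀ k, 1 ≤ k →
      F (x (k + 1)) - Fstar ≤ (1 - ν * αmin / ηb) * (F (x k) - Fstar) := by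
    intro k hk
    have h1 := key k hk
    have h2 : (1 - ν * α k / ηb) ≤ (1 - ν * αmin / ηb) := by
      have hle := hαlb k hk
      have h3 : ν * αmin ≤ ν * α k := mul_le_mul_of_nonneg_left hle hν.le
      have h4 : ν * αmin / ηb ≤ ν * α k / ηb := div_le_div_of_nonneg_right h3 hηb.le
      linarith
    calc F (x (k + 1)) - Fstar ≤ (1 - ν * α k / ηb) * (F (x k) - Fstar) := h1
      _ ≤ (1 - ν * αmin / ηb) * (F (x k) - Fstar) :=
          mul_le_mul_of_nonneg_right h2 (hFk k hk)
  -- induction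
  intro k hk
  induction k, hk using Nat.le_induction with
  | base => simpa using step 1 le_rfl
  | succ n hn ih =>
    calc F (x (n + 1 + 1)) - Fstar
        ≤ (1 - ν * αmin / ηb) * (F (x (n + 1)) - Fstar) := step (n + 1) (by omega)
      _ ≤ (1 - ν * αmin / ηb) * ((1 - ν * αmin / ηb) ^ n * (F (x 1) - Fstar)) :=
          mul_le_mul_of_nonneg_left ih hc0
      _ = (1 - ν * αmin / ηb) ^ (n + 1) * (F (x 1) - Fstar) := by ring
end
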